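/- Let G be a directed acyclic graph on {1,…,n}, n ≥ 2, with adjacency matrix A (A_{ij} = 1 iff j→i) and maximum path length m, and localized path polynomials p_i^G(z) = Σ_{k=0}^{m} (A^k𝟙)_i·z^k. Let W be the CTLN weight matrix of G with parameters δ > 0, 0 < ε < δ/(1+δ), θ > 0, and set β = −(ε+δ)/(1+δ). If every real root r of every p_i^G (i = 1,…,n) satisfies r ≤ β (equivalently, (ε+δ)/(1+δ) ≤ −r_G, where r_G is the greatest real root among all the p_i^G; the hypothesis holds vacuously if no p_i^G has a real root), then there exists x ∈ ℝ^n with x ≥ 0 componentwise and W·x = −θ·𝟙; i.e., the CTLN is balanced. -/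

import Mathlib

/-- Balanced State Theorem for DAGs: if every real root of every localized path
polynomial `p_i^G` is at most `β = −(ε+δ)/(1+δ)`, then the CTLN is balanced. -/
theorem stmt_16 (n : ℕ) (hn : 2 ≤ n)
    (E : Fin n → Fin n → Prop) [DecidableRel E]
    (hacyc : ∀ i, ¬ Relation.TransGen E i i)
    (A : Matrix (Fin n) (Fin n) ℝ)
    (hA : ∀ i j, A i j = if E j i then 1 else 0)
    (m : ℕ) (hnil : A ^ (m + 1) = 0)
    (δ ε θ : ℝ) (hδ : 0 < δ) (hε : 0 < ε) (hεδ : ε < δ / (1 + δ)) (hθ : 0 < θ)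
    (W : Matrix (Fin n) (Fin n) ℝ)
    (hW : ∀ i j, W i j = if i = j then 0 else if E j i then -1 + ε else -1 - δ)
    (β : ℝ) (hβ : β = -(ε + δ) / (1 + δ))
    (hroots : ∀ i : Fin n, ∀ r : ℝ,
      (∑ k ∈ Finset.range (m + 1), r ^ k * ((A ^ k).mulVec (fun _ => (1 : ℝ))) i) = 0 →
        r ≤ β) :
    ∃ x : Fin n → ℝ, (∀ i, 0 ≤ x i) ∧ ∀ i, W.mulVec x i = -θ := by
  have hδ1 : (0:ℝ) < 1 + δ := by linarith
  have hε1 : ε < 1 := lt_of_lt_of_le hεδ (by rw [div_le_one hδ1]; linarith)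
  have hβneg : β < 0 := by
    rw [hβ]
    apply div_neg_of_neg_of_pos _ hδ1
    linarith
  have hβgt : -1 < β := by
    rw [hβ, neg_div, neg_lt_neg_iff, div_lt_one hδ1]
    linarith
  have hβεδ : β * (1 + δ) = -(ε + δ) := by
    rw [hβ]; field_simp
  -- no self loops
  have hEii : ∀ i, ¬ E i i := fun i h => hacyc i (Relation.TransGen.single h)
  have hAii : ∀ i, A i i = 0 := by
    intro i; rw [hA]; simp [hEii i]
  have hA01 : ∀ i j, 0 ≤ A i j ∧ A i j ≤ 1 := by
    intro i j; rw [hA]; split <;> norm_num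
  -- the vector of localized path polynomials evaluated at β
  set v : Fin n → ℝ :=
    fun i => ∑ k ∈ Finset.range (m + 1), β ^ k * ((A ^ k).mulVec (fun _ => (1 : ℝ))) i with hv
  -- nonnegativity of v via IVT
  have hv0 : ∀ i, 0 ≤ v i := by
    intro i
    by_contra hcon
    push_neg at hcon
    set f : ℝ → ℝ :=
      fun r => ∑ k ∈ Finset.range (m + 1), r ^ k * ((A ^ k).mulVec (fun _ => (1 : ℝ))) i with hf
    have hcont : Continuous f := by
      apply continuous_finset_sum
      intro k _
      exact (continuous_pow k).mul continuous_const
    have hf0 : f 0 = 1 := by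
      show (∑ k ∈ Finset.range (m + 1), (0:ℝ) ^ k * ((A ^ k).mulVec (fun _ => (1 : ℝ))) i) = 1
      rw [Finset.sum_eq_single 0]
      · simp [Matrix.one_mulVec]
      · intro b _ hb; simp [zero_pow hb]
      · simp
    have hsub := intermediate_value_Icc (le_of_lt hβneg) hcont.continuousOn
    have h0mem : (0:ℝ) ∈ Set.Icc (f β) (f 0) := by
      constructor
      · exact le_of_lt hcon
      · rw [hf0]; norm_num
    obtain ⟨r, hr, hfr⟩ := hsub h0mem
    have hrle : r ≤ β := hroots i r hfr
    have hrβ : r = β := le_antisymm hrle hr.1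
    rw [hrβ] at hfr
    have : v i = 0 := hfr
    rw [this] at hcon
    exact lt_irrefl 0 hcon
  -- key identity : v j = 1 + β * (A v) j
  have hAv : ∀ j, (∑ k, A j k * v k)
      = ∑ l ∈ Finset.range (m + 1), β ^ l * ((A ^ (l + 1)).mulVec (fun _ => (1 : ℝ))) j := by
    intro j
    have : ∀ k, A j k * v k
        = ∑ l ∈ Finset.range (m + 1), A j k * (β ^ l * ((A ^ l).mulVec (fun _ => (1 : ℝ))) k) := by
      intro k; rw [hv, Finset.mul_sum]
    simp only [this]
    rw [Finset.sum_comm]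
    apply Finset.sum_congr rfl
    intro l _
    have hmv : ((A ^ (l + 1)).mulVec (fun _ => (1 : ℝ))) j
        = ∑ k, A j k * ((A ^ l).mulVec (fun _ => (1 : ℝ))) k := by
      rw [pow_succ']
      rw [← Matrix.mulVec_mulVec]
      rfl
    rw [hmv, Finset.mul_sum]
    apply Finset.sum_congr rfl
    intro k _
    ring
  have hid : ∀ j, v j = 1 + β * ∑ k, A j k * v k := by
    intro j
    rw [hAv, Finset.mul_sum]
    have hrhs : ∑ l ∈ Finset.range (m + 1),
        β * (β ^ l * ((A ^ (l + 1)).mulVec (fun _ => (1 : ℝ))) j)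
        = ∑ l ∈ Finset.range (m + 1),
          β ^ (l + 1) * ((A ^ (l + 1)).mulVec (fun _ => (1 : ℝ))) j := by
      apply Finset.sum_congr rfl; intro l _; ring
    rw [hrhs]
    rw [Finset.sum_range_succ]
    have hlast : β ^ (m + 1) * ((A ^ (m + 1)).mulVec (fun _ => (1 : ℝ))) j = 0 := by
      rw [hnil]; simp [Matrix.zero_mulVec]
    rw [hlast, add_zero]
    have hvj : v j
        = 1 + ∑ l ∈ Finset.range m, β ^ (l + 1) * ((A ^ (l + 1)).mulVec (fun _ => (1 : ℝ))) j := by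
      show (∑ k ∈ Finset.range (m + 1), β ^ k * ((A ^ k).mulVec (fun _ => (1 : ℝ))) j) = _
      rw [Finset.sum_range_succ']
      simp [Matrix.one_mulVec, add_comm]
    rw [hvj]
  set s : ℝ := ∑ j, v j with hs
  -- (A v) j ≤ s - v j
  have hAvle : ∀ j, (∑ k, A j k * v k) ≤ s - v j := by
    intro j
    have h1 : (∑ k, A j k * v k) ≤ ∑ k, (if k = j then 0 else v k) := by
      apply Finset.sum_le_sum
      intro k _
      by_cases hk : k = j
      · subst hk; rw [hAii]; simp
      · simp only [hk, if_false]
        calc A j k * v k ≤ 1 * v k :=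
              mul_le_mul_of_nonneg_right (hA01 j k).2 (hv0 k)
          _ = v k := one_mul _
    have h2 : (∑ k, (if k = j then (0:ℝ) else v k)) = s - v j := by
      have : ∀ k, (if k = j then (0:ℝ) else v k) = v k - (if k = j then v k else 0) := by
        intro k; by_cases hk : k = j <;> simp [hk]
      simp only [this]
      rw [Finset.sum_sub_distrib, Finset.sum_ite_eq' Finset.univ j v]
      simp [hs]
    rw [h2] at h1
    exact h1
  -- v j ≥ (1 + β s)/(1+β) pointwise, then sum to get s > 1
  have hvlb : ∀ j, 1 + β * (s - v j) ≤ v j := by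
    intro j
    have := mul_le_mul_of_nonpos_left (hAvle j) (le_of_lt hβneg)
    have hidj := hid j
    linarith
  have hsum : (n : ℝ) + β * ((n : ℝ) * s - s) ≤ s := by
    have h1 : ∑ j : Fin n, (1 + β * (s - v j)) ≤ ∑ j, v j :=
      Finset.sum_le_sum (fun j _ => hvlb j)
    have h2 : ∑ j : Fin n, (1 + β * (s - v j))
        = (n : ℝ) + β * ((n : ℝ) * s - s) := by
      rw [Finset.sum_add_distrib, Finset.sum_const, ← Finset.mul_sum, Finset.sum_sub_distrib,
        Finset.sum_const]
      simp [hs, mul_comm]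
    rw [h2] at h1
    exact h1
  have hn2 : (2:ℝ) ≤ (n:ℝ) := by exact_mod_cast hn
  have hs1 : 1 < s := by
    by_contra hcon
    push_neg at hcon
    have h1 : s * (1 - β * ((n:ℝ) - 1)) ≤ 1 * (1 - β * ((n:ℝ) - 1)) := by
      apply mul_le_mul_of_nonneg_right hcon
      nlinarith
    nlinarith [mul_pos (by linarith : (0:ℝ) < 1 + β) (by linarith : (0:ℝ) < (n:ℝ) - 1)]
  -- define the balanced state
  have hden : 0 < (1 + δ) * (s - 1) := by
    apply mul_pos hδ1; linarith
  set c : ℝ := θ / ((1 + δ) * (s - 1)) with hc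
  have hcpos : 0 < c := div_pos hθ hden
  refine ⟨fun i => c * v i, fun i => mul_nonneg (le_of_lt hcpos) (hv0 i), ?_⟩
  intro j
  -- decompose W
  have hWd : ∀ k, W j k = (ε + δ) * A j k + (if j = k then 1 + δ else 0) - (1 + δ) := by
    intro k
    rw [hW, hA]
    by_cases hjk : j = k
    · subst hjk
      simp [hEii j]
    · have hkj : ¬ k = j := fun h => hjk h.symm
      simp only [hjk, if_false]
      by_cases he : E k j <;> simp [he] <;> ring
  have hWv : ∑ k, W j k * v k = (1 + δ) * (1 - s) := by
    have h1 : ∑ k, W j k * v k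
        = (ε + δ) * (∑ k, A j k * v k) + (1 + δ) * v j - (1 + δ) * s := by
      simp only [hWd]
      have hterm : ∀ k ∈ Finset.univ,
          ((ε + δ) * A j k + (if j = k then 1 + δ else 0) - (1 + δ)) * v k
          = (ε + δ) * (A j k * v k) + (if j = k then (1 + δ) * v k else 0) - (1 + δ) * v k := by
        intro k _
        by_cases h : j = k <;> simp [h] <;> ring
      rw [Finset.sum_congr rfl hterm]
      rw [Finset.sum_sub_distrib, Finset.sum_add_distrib, ← Finset.mul_sum,
        Finset.sum_ite_eq Finset.univ j (fun k => (1 + δ) * v k), ← Finset.mul_sum]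
      simp [hs]
    have h2 : (ε + δ) * (∑ k, A j k * v k) = -(1 + δ) * (v j - 1) := by
      have hb : β * (∑ k, A j k * v k) = v j - 1 := by
        have := hid j; linarith
      have : (ε + δ) * (∑ k, A j k * v k)
          = -(β * (1 + δ)) * (∑ k, A j k * v k) := by
        rw [hβεδ]; ring
      rw [this]
      rw [show -(β * (1 + δ)) * (∑ k, A j k * v k)
          = -(1 + δ) * (β * (∑ k, A j k * v k)) by ring, hb]
    rw [h1, h2]; ring
  have hmv : W.mulVec (fun i => c * v i) j = c * ∑ k, W j k * v k := by
    unfold Matrix.mulVec dotProduct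
    rw [Finset.mul_sum]
    apply Finset.sum_congr rfl
    intro k _
    ring
  rw [hmv, hWv, hc]
  rw [div_mul_eq_mul_div, div_eq_iff hden.ne']
  ring
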